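/- No single two-qubit gate suffices up to the computational-basis 1+1+1+1 measurement don't-care: for every G ∈ Matrix.unitaryGroup (Fin 2 × Fin 2) ℂ there exists u ∈ Matrix.unitaryGroup (Fin 2 × Fin 2) ℂ such that for all a, b, c, d ∈ Matrix.unitaryGroup (Fin 2) ℂ and every δ : Fin 2 × Fin 2 → ℂ with ‖δ p‖ = 1 for all p, u ≠ Matrix.diagonal δ * (c ⊗ d) * G * (a ⊗ b). -/

import Mathlib

open Matrix Kronecker

noncomputable section

def σy : Matrix (Fin 2) (Fin 2) ℂ := !![0, -Complex.I; Complex.I, 0]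

def eps (φ : Fin 2 × Fin 2 → ℂ) : ℂ := φ ⬝ᵥ ((σy ⊗ₖ σy).mulVec φ)

def CNOT : Matrix (Fin 2 × Fin 2) (Fin 2 × Fin 2) ℂ :=
  Matrix.of fun p q => if p.1 = q.1 ∧ p.2 = q.1 + q.2 then 1 else 0

def e (i j : Fin 2) : Fin 2 × Fin 2 → ℂ := Pi.single (i, j) 1

def e₀ : Fin 2 × Fin 2 → ℂ := e 0 0

def Rz (θ : ℝ) : Matrix (Fin 2) (Fin 2) ℂ :=
  !![Complex.exp (Complex.I * θ / 2), 0; 0, Complex.exp (-Complex.I * θ / 2)]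

def Rx (θ : ℝ) : Matrix (Fin 2) (Fin 2) ℂ :=
  !![(Real.cos (θ / 2) : ℂ), Complex.I * Real.sin (θ / 2);
     Complex.I * Real.sin (θ / 2), (Real.cos (θ / 2) : ℂ)]

-- any 2x2 matrix g satisfies g * σy * gᵀ = det g • σy
lemma sigma_conj (g : Matrix (Fin 2) (Fin 2) ℂ) : g * σy * gᵀ = g.det • σy := by
  ext i j
  fin_cases i <;> fin_cases j <;>
    simp [σy, Matrix.mul_apply, Fin.sum_univ_two, Matrix.det_fin_two] <;> ring

-- conjTranspose of kronecker
lemma kron_conjT (a b : Matrix (Fin 2) (Fin 2) ℂ) : (a ⊗ₖ b)ᴴ = aᴴ ⊗ₖ bᴴ := by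
  ext p q
  simp [Matrix.conjTranspose_apply, Matrix.kroneckerMap_apply]

lemma kron_mem (a b : Matrix (Fin 2) (Fin 2) ℂ) (ha : a ∈ Matrix.unitaryGroup (Fin 2) ℂ)
    (hb : b ∈ Matrix.unitaryGroup (Fin 2) ℂ) :
    a ⊗ₖ b ∈ Matrix.unitaryGroup (Fin 2 × Fin 2) ℂ := by
  rw [Matrix.mem_unitaryGroup_iff] at ha hb ⊢
  show (a ⊗ₖ b) * (a ⊗ₖ b)ᴴ = 1
  rw [kron_conjT, ← Matrix.mul_kronecker_mul]
  show (a * aᴴ) ⊗ₖ (b * bᴴ) = 1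
  rw [show a * aᴴ = 1 from ha, show b * bᴴ = 1 from hb, Matrix.one_kronecker_one]

def Ubad : Matrix (Fin 2 × Fin 2) (Fin 2 × Fin 2) ℂ :=
  Matrix.of fun p q =>
    if p = (0,0) ∧ q = (0,0) then 1 else
    if p = (0,1) ∧ q = (0,1) then 4/5 else
    if p = (0,1) ∧ q = (1,0) then -(3/5) else
    if p = (1,0) ∧ q = (0,1) then 3/5 else
    if p = (1,0) ∧ q = (1,0) then 4/5 else
    if p = (1,1) ∧ q = (1,1) then 1 else 0

lemma Ubad_mem : Ubad ∈ Matrix.unitaryGroup (Fin 2 × Fin 2) ℂ := by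
  rw [Matrix.mem_unitaryGroup_iff]
  show Ubad * Ubadᴴ = 1
  ext ⟨i,j⟩ ⟨k,l⟩
  fin_cases i <;> fin_cases j <;> fin_cases k <;> fin_cases l <;>
    simp [Ubad, Matrix.mul_apply, Fintype.sum_prod_type, Fin.sum_univ_two,
      Matrix.conjTranspose_apply, Matrix.one_apply, Prod.ext_iff, map_ofNat, Complex.conj_ofNat] <;> norm_num [Complex.ext_iff]

lemma M00 : (Ubad * (σy ⊗ₖ σy) * Ubadᵀ) (0,0) (0,0) = 0 := by
  simp [Ubad, σy, Matrix.mul_apply, Fintype.sum_prod_type, Fin.sum_univ_two,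
    Matrix.transpose_apply, Prod.ext_iff]

lemma M10 : (Ubad * (σy ⊗ₖ σy) * Ubadᵀ) (1,0) (1,0) = 24/25 := by
  simp [Ubad, σy, Matrix.mul_apply, Fintype.sum_prod_type, Fin.sum_univ_two,
    Matrix.transpose_apply, Prod.ext_iff]
  norm_num

lemma Yentry (c d : Matrix (Fin 2) (Fin 2) ℂ) (δ : Fin 2 × Fin 2 → ℂ) (i : Fin 2) :
    ((c ⊗ₖ d) * (Matrix.diagonal δ * (σy ⊗ₖ σy) * Matrix.diagonal δ) * (c ⊗ₖ d)ᵀ) (i,0) (i,0)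
      = 2 * (δ (0,1) * δ (1,0) - δ (0,0) * δ (1,1)) * (c i 0 * c i 1 * (d 0 0 * d 0 1)) := by
  simp [σy, Matrix.mul_apply, Fintype.sum_prod_type, Fin.sum_univ_two,
    Matrix.transpose_apply, Matrix.diagonal_apply, Prod.ext_iff]
  ring

lemma unitary_entry_norms {c : Matrix (Fin 2) (Fin 2) ℂ} (hc : c ∈ Matrix.unitaryGroup (Fin 2) ℂ) :
    ‖c 1 0 * c 1 1‖ = ‖c 0 0 * c 0 1‖ := by
  have h1 : (c * cᴴ) 0 0 = 1 := by
    rw [show c * cᴴ = 1 from Matrix.mem_unitaryGroup_iff.mp hc]; simp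
  have h2 : (cᴴ * c) 0 0 = 1 := by
    rw [show cᴴ * c = 1 from Matrix.mem_unitaryGroup_iff'.mp hc]; simp
  have h3 : (c * cᴴ) 1 1 = 1 := by
    rw [show c * cᴴ = 1 from Matrix.mem_unitaryGroup_iff.mp hc]; simp
  simp only [Matrix.mul_apply, Fin.sum_univ_two, Matrix.conjTranspose_apply, Complex.star_def,
    Complex.mul_conj, ← Complex.normSq_eq_conj_mul_self] at h1 h2 h3
  norm_cast at h1 h2 h3
  have e1 : Complex.normSq (c 0 1) = Complex.normSq (c 1 0) := by linarith
  have e2 : Complex.normSq (c 1 1) = Complex.normSq (c 0 0) := by linarith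
  have n1 : ‖c 0 1‖ = ‖c 1 0‖ := by
    rw [Complex.norm_def, Complex.norm_def, e1]
  have n2 : ‖c 1 1‖ = ‖c 0 0‖ := by
    rw [Complex.norm_def, Complex.norm_def, e2]
  rw [norm_mul, norm_mul, n2, ← n1, mul_comm]

lemma det_norm_one {a : Matrix (Fin 2) (Fin 2) ℂ} (ha : a ∈ Matrix.unitaryGroup (Fin 2) ℂ) :
    ‖a.det‖ = 1 := by
  have h : a.det * star a.det = 1 := by
    have := congrArg Matrix.det (show a * aᴴ = 1 from Matrix.mem_unitaryGroup_iff.mp ha)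
    rwa [Matrix.det_mul, Matrix.det_conjTranspose, Matrix.det_one] at this
  have : ‖a.det * star a.det‖ = 1 := by rw [h]; simp
  rw [norm_mul, norm_star] at this
  nlinarith [norm_nonneg a.det]

lemma core {c d a b : Matrix (Fin 2) (Fin 2) ℂ}
    (hc : c ∈ Matrix.unitaryGroup (Fin 2) ℂ) (hd : d ∈ Matrix.unitaryGroup (Fin 2) ℂ)
    (ha : a ∈ Matrix.unitaryGroup (Fin 2) ℂ) (hb : b ∈ Matrix.unitaryGroup (Fin 2) ℂ)
    (δ₁ δ₂ : Fin 2 × Fin 2 → ℂ) (h1 : ∀ p, ‖δ₁ p‖ = 1) (h2 : ∀ p, ‖δ₂ p‖ = 1) :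
    Ubad ≠ Matrix.diagonal δ₁ * (c ⊗ₖ d) * Matrix.diagonal δ₂ * (a ⊗ₖ b) := by
  intro heq
  set Sg : Matrix (Fin 2 × Fin 2) (Fin 2 × Fin 2) ℂ := σy ⊗ₖ σy with hSg
  set μ : ℂ := a.det * b.det with hμ
  -- Step A
  have hA : (a ⊗ₖ b) * Sg * (a ⊗ₖ b)ᵀ = μ • Sg := by
    rw [hSg, ← Matrix.kroneckerMap_transpose, ← Matrix.mul_kronecker_mul,
      ← Matrix.mul_kronecker_mul, sigma_conj, sigma_conj, Matrix.smul_kronecker,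
      Matrix.kronecker_smul, smul_smul, hμ]
  have hA' : ∀ X : Matrix (Fin 2 × Fin 2) (Fin 2 × Fin 2) ℂ,
      (a ⊗ₖ b) * (Sg * ((a ⊗ₖ b)ᵀ * X)) = μ • (Sg * X) := by
    intro X
    rw [← Matrix.mul_assoc, ← Matrix.mul_assoc, hA, Matrix.smul_mul]
  -- Step B
  have key : Ubad * Sg * Ubadᵀ
      = μ • (Matrix.diagonal δ₁ *
          ((c ⊗ₖ d) * (Matrix.diagonal δ₂ * Sg * Matrix.diagonal δ₂) * (c ⊗ₖ d)ᵀ) *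
          Matrix.diagonal δ₁) := by
    rw [heq]
    simp only [Matrix.transpose_mul, Matrix.diagonal_transpose, Matrix.mul_assoc]
    rw [hA']
    simp only [Matrix.mul_smul, Matrix.smul_mul]
  -- evaluate entries
  have E0 := congrFun (congrFun key ((0:Fin 2),(0:Fin 2))) ((0:Fin 2),(0:Fin 2))
  have E1 := congrFun (congrFun key ((1:Fin 2),(0:Fin 2))) ((1:Fin 2),(0:Fin 2))
  rw [M00] at E0
  rw [M10] at E1
  have hent : ∀ i : Fin 2,
      (μ • (Matrix.diagonal δ₁ *
          ((c ⊗ₖ d) * (Matrix.diagonal δ₂ * Sg * Matrix.diagonal δ₂) * (c ⊗ₖ d)ᵀ) *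
          Matrix.diagonal δ₁)) (i,0) (i,0)
      = μ * (δ₁ (i,0) * (2 * (δ₂ (0,1) * δ₂ (1,0) - δ₂ (0,0) * δ₂ (1,1)) *
          (c i 0 * c i 1 * (d 0 0 * d 0 1))) * δ₁ (i,0)) := by
    intro i
    rw [Matrix.smul_apply, Matrix.mul_diagonal, Matrix.diagonal_mul, Yentry]
    simp [mul_comm, mul_assoc, mul_left_comm]
  rw [hent 0] at E0
  rw [hent 1] at E1
  -- norms
  have hμn : ‖μ‖ = 1 := by rw [hμ, norm_mul, det_norm_one ha, det_norm_one hb]; norm_num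
  have N0 := congrArg norm E0
  have N1 := congrArg norm E1
  simp only [norm_mul, norm_zero, hμn, h1, one_mul, mul_one] at N0 N1
  have hcc : ‖c 1 0‖ * ‖c 1 1‖ = ‖c 0 0‖ * ‖c 0 1‖ := by
    have := unitary_entry_norms hc; rwa [norm_mul, norm_mul] at this
  rw [hcc, ← N0] at N1
  norm_num at N1

lemma diag_unit_inv {δ : Fin 2 × Fin 2 → ℂ} (h : ∀ p, ‖δ p‖ = 1) :
    (Matrix.diagonal δ)ᴴ * Matrix.diagonal δ = 1 := by
  rw [Matrix.diagonal_conjTranspose, Matrix.diagonal_mul_diagonal]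
  have hfun : (fun p => star (δ p) * δ p) = fun _ => (1:ℂ) := by
    funext p
    have hn : Complex.normSq (δ p) = 1 := by
      have := h p
      rw [← Complex.sq_norm, this]; norm_num
    simpa [← Complex.normSq_eq_conj_mul_self] using congrArg (Complex.ofReal) hn
  calc Matrix.diagonal (star δ * δ) = Matrix.diagonal (fun p => star (δ p) * δ p) := rfl
    _ = Matrix.diagonal (fun _ => (1:ℂ)) := by rw [hfun]
    _ = 1 := Matrix.diagonal_one

theorem single_gate_insufficient_diagonal_dont_care
    (G : Matrix (Fin 2 × Fin 2) (Fin 2 × Fin 2) ℂ)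
    (hG : G ∈ Matrix.unitaryGroup (Fin 2 × Fin 2) ℂ) :
    ∃ u ∈ Matrix.unitaryGroup (Fin 2 × Fin 2) ℂ,
      ∀ a ∈ Matrix.unitaryGroup (Fin 2) ℂ, ∀ b ∈ Matrix.unitaryGroup (Fin 2) ℂ,
        ∀ c ∈ Matrix.unitaryGroup (Fin 2) ℂ, ∀ d ∈ Matrix.unitaryGroup (Fin 2) ℂ,
          ∀ δ : Fin 2 × Fin 2 → ℂ, (∀ p, ‖δ p‖ = 1) →
            u ≠ Matrix.diagonal δ * (c ⊗ₖ d) * G * (a ⊗ₖ b) := by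
  by_contra hcon
  push_neg at hcon
  obtain ⟨a₀, ha₀, b₀, hb₀, c₀, hc₀, d₀, hd₀, δ₀, hδ₀, heq₀⟩ := hcon 1 (one_mem _)
  obtain ⟨a₁, ha₁, b₁, hb₁, c₁, hc₁, d₁, hd₁, δ₁, hδ₁, heq₁⟩ := hcon Ubad Ubad_mem
  -- solve for G from heq₀
  have hL0 : (c₀ ⊗ₖ d₀)ᴴ * (c₀ ⊗ₖ d₀) = 1 :=
    Matrix.mem_unitaryGroup_iff'.mp (kron_mem _ _ hc₀ hd₀)
  have hR0 : (a₀ ⊗ₖ b₀) * (a₀ ⊗ₖ b₀)ᴴ = 1 :=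
    Matrix.mem_unitaryGroup_iff.mp (kron_mem _ _ ha₀ hb₀)
  have hD0 := diag_unit_inv hδ₀
  have s1 : (c₀ ⊗ₖ d₀) * G * (a₀ ⊗ₖ b₀) = (Matrix.diagonal δ₀)ᴴ := by
    have := congrArg ((Matrix.diagonal δ₀)ᴴ * ·) heq₀
    simp only [mul_one] at this
    rw [show (Matrix.diagonal δ₀)ᴴ * (Matrix.diagonal δ₀ * (c₀ ⊗ₖ d₀) * G * (a₀ ⊗ₖ b₀))
        = ((Matrix.diagonal δ₀)ᴴ * Matrix.diagonal δ₀) * ((c₀ ⊗ₖ d₀) * G * (a₀ ⊗ₖ b₀)) by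
        simp only [Matrix.mul_assoc], hD0, one_mul] at this
    exact this.symm
  have s2 : G = (c₀ ⊗ₖ d₀)ᴴ * (Matrix.diagonal δ₀)ᴴ * (a₀ ⊗ₖ b₀)ᴴ := by
    have := congrArg (fun X => (c₀ ⊗ₖ d₀)ᴴ * X * (a₀ ⊗ₖ b₀)ᴴ) s1
    simp only at this
    rw [show (c₀ ⊗ₖ d₀)ᴴ * ((c₀ ⊗ₖ d₀) * G * (a₀ ⊗ₖ b₀)) * (a₀ ⊗ₖ b₀)ᴴ
        = ((c₀ ⊗ₖ d₀)ᴴ * (c₀ ⊗ₖ d₀)) * G * ((a₀ ⊗ₖ b₀) * (a₀ ⊗ₖ b₀)ᴴ) by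
        simp only [Matrix.mul_assoc], hL0, hR0, one_mul, mul_one] at this
    exact this
  rw [s2] at heq₁
  -- massage into core form
  have heq₂ : Ubad = Matrix.diagonal δ₁ * ((c₁ * c₀ᴴ) ⊗ₖ (d₁ * d₀ᴴ)) *
      Matrix.diagonal (fun p => star (δ₀ p)) * ((a₀ᴴ * a₁) ⊗ₖ (b₀ᴴ * b₁)) := by
    rw [heq₁]
    rw [Matrix.mul_kronecker_mul, Matrix.mul_kronecker_mul, kron_conjT, kron_conjT,
      Matrix.diagonal_conjTranspose]
    simp only [Matrix.mul_assoc]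
    rfl
  exact core (mul_mem hc₁ (Unitary.star_mem hc₀)) (mul_mem hd₁ (Unitary.star_mem hd₀))
    (mul_mem (Unitary.star_mem ha₀) ha₁) (mul_mem (Unitary.star_mem hb₀) hb₁)
    δ₁ (fun p => star (δ₀ p)) hδ₁ (fun p => by simpa using hδ₀ p) heq₂
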